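/- Let X and Y be Banach spaces, where X contains a closed subspace isomorphic to c₀ and the dual unit ball of Y is weak* sequentially compact, and let R : X → Y be a bounded linear operator which is bounded below by η > 0 (i.e., ‖R x‖ ≥ η·‖x‖ for all x ∈ X). Then for every C > 1: the range of R contains a closed subspace Z which is C-complemented in Y (there is a bounded projection of Y onto Z of norm at most C) and C-isomorphic to c₀; and there exist bounded linear operators U : Y → c₀ and V : c₀ → X such that U∘R∘V = I_{c₀} and ‖U‖·‖V‖ ≤ C²/η. -/

import Mathlib

set_option maxHeartbeats 1000000

open scoped ENNReal ZeroAtInfty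
open Filter

section Aux
variable {𝕜 : Type*} [RCLike 𝕜]

noncomputable def mkC0 (f : ℕ → 𝕜) (hf : Tendsto f atTop (nhds 0)) : C₀(ℕ, 𝕜) :=
  ⟨⟨f, continuous_of_discreteTopology⟩, by
    rwa [cocompact_eq_cofinite, Nat.cofinite_eq_atTop]⟩

@[simp] lemma mkC0_apply (f : ℕ → 𝕜) (hf) (n : ℕ) : mkC0 f hf n = f n := rfl

lemma c0_tendsto (g : C₀(ℕ, 𝕜)) : Tendsto (fun n => g n) atTop (nhds 0) := by
  have := g.zero_at_infty'
  rwa [cocompact_eq_cofinite, Nat.cofinite_eq_atTop] at this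

lemma c0_norm_apply_le (g : C₀(ℕ, 𝕜)) (n : ℕ) : ‖g n‖ ≤ ‖g‖ := by
  rw [← ZeroAtInftyContinuousMap.norm_toBCF_eq_norm]
  exact g.toBCF.norm_coe_le_norm n

lemma c0_norm_le (g : C₀(ℕ, 𝕜)) (M : ℝ) (hM : 0 ≤ M) (h : ∀ n, ‖g n‖ ≤ M) : ‖g‖ ≤ M := by
  rw [← ZeroAtInftyContinuousMap.norm_toBCF_eq_norm]
  exact BoundedContinuousFunction.norm_le hM |>.2 h

noncomputable def stdb (j : ℕ) : C₀(ℕ, 𝕜) :=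
  mkC0 (fun n => if n = j then 1 else 0) (by
    apply Tendsto.congr' (f₁ := fun _ => (0:𝕜))
    · filter_upwards [eventually_ge_atTop (j+1)] with n hn
      simp [Nat.ne_of_gt hn]
    · exact tendsto_const_nhds)

lemma stdb_norm (j : ℕ) : ‖(stdb j : C₀(ℕ, 𝕜))‖ = 1 := by
  apply le_antisymm
  · apply c0_norm_le _ _ zero_le_one
    intro n
    by_cases h : n = j <;> simp [stdb, h]
  · have := c0_norm_apply_le (stdb (𝕜 := 𝕜) j) j
    simpa [stdb] using this

noncomputable def efin (s : Finset ℕ) (c : ℕ → 𝕜) : C₀(ℕ, 𝕜) :=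
  mkC0 (fun n => if n ∈ s then c n else 0) (by
    apply Tendsto.congr' (f₁ := fun _ => (0:𝕜))
    · filter_upwards [eventually_gt_atTop (s.sup id)] with n hn
      have : n ∉ s := fun hns => absurd (Finset.le_sup (f := id) hns) (by simp only [id]; omega)
      simp [this]
    · exact tendsto_const_nhds)

lemma efin_norm_le (s : Finset ℕ) (c : ℕ → 𝕜) (h : ∀ j, ‖c j‖ ≤ 1) : ‖efin s c‖ ≤ 1 := by
  apply c0_norm_le _ _ zero_le_one
  intro n
  by_cases hn : n ∈ s <;> simp [efin, hn, h n]

lemma sum_stdb_eq_efin (s : Finset ℕ) (c : ℕ → 𝕜) :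
    (∑ j ∈ s, c j • stdb j) = efin s c := by
  apply ZeroAtInftyContinuousMap.ext
  intro n
  have hcoe : ∀ (t : Finset ℕ) (g : ℕ → C₀(ℕ, 𝕜)), ((∑ j ∈ t, g j) : C₀(ℕ, 𝕜)) n = ∑ j ∈ t, g j n := by
    intro t g
    induction t using Finset.induction_on with
    | empty => simp
    | insert a t' hj ih => simp [Finset.sum_insert hj, ih]
  rw [hcoe]
  simp only [ZeroAtInftyContinuousMap.coe_smul]
  by_cases hn : n ∈ s
  · rw [Finset.sum_eq_single n]
    · simp [stdb, efin, hn]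
    · intro b hb hbn
      simp [stdb, Ne.symm hbn]
    · intro h; exact absurd hn h
  · rw [Finset.sum_eq_zero]
    · simp [efin, hn]
    · intro b hb
      have : n ≠ b := fun h => hn (h ▸ hb)
      simp [stdb, this]

end Aux

section Aux2
variable {E : Type*} [NormedAddCommGroup E]

lemma aux_summable [CompleteSpace E] (f : ℕ → E) (a : ℕ → ℝ) (ha : Tendsto a atTop (nhds 0))
    (c : ℝ) (hc : 0 ≤ c) (hb : ∀ (t : Finset ℕ) (M : ℝ), 0 ≤ M → (∀ k ∈ t, a k ≤ M) →
      ‖∑ k ∈ t, f k‖ ≤ c * M) : Summable f := by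
  rw [summable_iff_vanishing]
  intro U hU
  rcases Metric.mem_nhds_iff.1 hU with ⟨r, hr, hball⟩
  have hc0 : (0:ℝ) < c + 1 := by linarith
  have hM : (0:ℝ) < r / (2 * (c + 1)) := by positivity
  rcases (Metric.tendsto_atTop.1 ha (r / (2 * (c + 1))) hM) with ⟨N, hN⟩
  refine ⟨Finset.range N, fun t ht => ?_⟩
  apply hball
  simp only [Metric.mem_ball, dist_zero_right]
  have hb' : ‖∑ k ∈ t, f k‖ ≤ c * (r / (2 * (c + 1))) := by
    apply hb t _ (le_of_lt hM)
    intro k hk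
    have hkN : N ≤ k := by
      by_contra hlt
      exact (Finset.disjoint_left.1 ht hk) (Finset.mem_range.2 (by omega))
    have := hN k hkN
    rw [Real.dist_eq, sub_zero] at this
    exact (le_abs_self _).trans this.le
  have h2 : (0:ℝ) < 2 * (c + 1) := by positivity
  calc ‖∑ k ∈ t, f k‖ ≤ c * (r / (2 * (c + 1))) := hb'
    _ = c * r / (2 * (c + 1)) := by ring
    _ < r := by
      rw [div_lt_iff₀ h2]
      nlinarith

lemma aux_hasSum_norm_le {f : ℕ → E} {S : E} (h : HasSum f S) (M : ℝ)
    (hb : ∀ t : Finset ℕ, ‖∑ k ∈ t, f k‖ ≤ M) : ‖S‖ ≤ M := by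
  have : Tendsto (fun t : Finset ℕ => ‖∑ k ∈ t, f k‖) atTop (nhds ‖S‖) :=
    (continuous_norm.tendsto S).comp h
  exact le_of_tendsto' this hb

end Aux2

section Main
variable {𝕜 : Type*} [RCLike 𝕜]
variable {X : Type*} [NormedAddCommGroup X] [NormedSpace 𝕜 X] [CompleteSpace X]
variable {Y : Type*} [NormedAddCommGroup Y] [NormedSpace 𝕜 Y] [CompleteSpace Y]

lemma stepA (hX : ∃ W : Submodule 𝕜 X, IsClosed (W : Set X) ∧ Nonempty (↥W ≃L[𝕜] C₀(ℕ, 𝕜)))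
    (R : X →L[𝕜] Y) (η : ℝ) (hη : 0 < η) (hR : ∀ x : X, η * ‖x‖ ≤ ‖R x‖)
    (C : ℝ) (hC : 1 < C) :
    ∃ (y : ℕ → Y) (yX : ℕ → X), (∀ k, R (yX k) = y k) ∧
      (∀ (t : Finset ℕ) (a : ℕ → 𝕜) (σ : ℕ → ℕ), Function.Injective σ →
        (∀ k ∈ t, ‖a k‖ ≤ 1) → ‖∑ k ∈ t, a k • y (σ k)‖ ≤ C) ∧
      (∀ (t : Finset ℕ) (a : ℕ → 𝕜) (n : ℕ), n ∈ t → ‖a n‖ ≤ ‖∑ k ∈ t, a k • y k‖) := by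
  classical
  set δ : ℝ := (C - 1) / (3*C + 1) with hδ
  have hδpos : 0 < δ := div_pos (by linarith) (by linarith)
  have hδeq : 1 + δ = C * (1 - 3*δ) := by rw [hδ]; field_simp; ring
  have h3δ : 0 < 1 - 3*δ := by
    have h4 : 1 - 3*δ = 4/(3*C+1) := by rw [hδ]; field_simp; ring
    rw [h4]
    apply div_pos <;> linarith
  obtain ⟨W, -, ⟨φ⟩⟩ := hX
  set ψ : C₀(ℕ, 𝕜) →L[𝕜] X := W.subtypeL.comp (φ.symm : C₀(ℕ, 𝕜) →L[𝕜] W) with hψdef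
  set T : C₀(ℕ, 𝕜) →L[𝕜] Y := R.comp ψ with hTdef
  set x : ℕ → Y := fun j => T (stdb j) with hx
  set nφ : ℝ := ‖(φ : ↥W →L[𝕜] C₀(ℕ, 𝕜))‖ with hnφ
  have hψ : ∀ f : C₀(ℕ, 𝕜), ‖f‖ ≤ nφ * ‖ψ f‖ := by
    intro f
    have h2 : ‖φ (φ.symm f)‖ ≤ nφ * ‖φ.symm f‖ := (φ : ↥W →L[𝕜] C₀(ℕ, 𝕜)).le_opNorm _
    rw [φ.apply_symm_apply f] at h2
    exact h2
  have hnφ0 : 0 < nφ := by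
    rcases lt_or_ge 0 nφ with h | h
    · exact h
    · exfalso
      have h1 := hψ (stdb 0)
      rw [stdb_norm] at h1
      nlinarith [norm_nonneg (ψ (stdb (𝕜 := 𝕜) 0))]
  have hxlow : ∀ j, η / nφ ≤ ‖x j‖ := by
    intro j
    have h1 := hR (ψ (stdb j))
    have h2 := hψ (stdb j)
    rw [stdb_norm] at h2
    have hxj : x j = R (ψ (stdb j)) := rfl
    rw [hxj, div_le_iff₀ hnφ0]
    nlinarith [norm_nonneg (ψ (stdb (𝕜 := 𝕜) j)), norm_nonneg (R (ψ (stdb (𝕜 := 𝕜) j)))]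
  set D : ℕ → Set ℝ := fun m => {r | ∃ (s : Finset ℕ) (c : ℕ → 𝕜), (∀ j, ‖c j‖ ≤ 1) ∧
    (∀ j ∈ s, m ≤ j) ∧ r = ‖∑ j ∈ s, c j • x j‖} with hD
  have hDmem : ∀ m, ‖x m‖ ∈ D m := by
    intro m
    exact ⟨{m}, fun _ => 1, by simp, by simp, by simp⟩
  have hDbdd : ∀ m, ∀ r ∈ D m, r ≤ ‖T‖ := by
    intro m r hr
    obtain ⟨s, c, hc, -, rfl⟩ := hr
    have h1 : (∑ j ∈ s, c j • x j) = T (efin s c) := by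
      rw [← sum_stdb_eq_efin, map_sum]
      apply Finset.sum_congr rfl
      intro j hj
      rw [map_smul]
    rw [h1]
    calc ‖T (efin s c)‖ ≤ ‖T‖ * ‖efin s c‖ := T.le_opNorm _
      _ ≤ ‖T‖ * 1 := mul_le_mul_of_nonneg_left (efin_norm_le s c hc) (norm_nonneg T)
      _ = ‖T‖ := mul_one _
  set lam : ℕ → ℝ := fun m => sSup (D m) with hlam
  have hlam_mem_le : ∀ m, ∀ r ∈ D m, r ≤ lam m := fun m r hr =>
    le_csSup ⟨‖T‖, fun r' hr' => hDbdd m r' hr'⟩ hr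
  have hlam_ge : ∀ m, η / nφ ≤ lam m := fun m =>
    le_trans (hxlow m) (hlam_mem_le m _ (hDmem m))
  set lam' : ℝ := ⨅ m, lam m with hlam'
  have hlam'_pos : 0 < lam' := lt_of_lt_of_le (div_pos hη hnφ0) (le_ciInf hlam_ge)
  have hlam'_le : ∀ m, lam' ≤ lam m := fun m =>
    ciInf_le ⟨η / nφ, by rintro r ⟨m', rfl⟩; exact hlam_ge m'⟩ m
  obtain ⟨m₀, hm₀⟩ : ∃ m, lam m < lam' * (1 + δ) := by
    apply exists_lt_of_ciInf_lt
    rw [← hlam']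
    calc lam' = lam' * 1 := (mul_one _).symm
      _ < lam' * (1 + δ) := mul_lt_mul_of_pos_left (by linarith) hlam'_pos
  have exGood : ∀ n, ∃ (s : Finset ℕ) (c : ℕ → 𝕜), (∀ j, ‖c j‖ ≤ 1) ∧
      (∀ j ∈ s, n ≤ j) ∧ lam' * (1 - δ) < ‖∑ j ∈ s, c j • x j‖ := by
    intro n
    have h1 : lam' * (1 - δ) < lam n := by
      refine lt_of_lt_of_le ?_ (hlam'_le n)
      calc lam' * (1 - δ) < lam' * 1 := mul_lt_mul_of_pos_left (by linarith) hlam'_pos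
        _ = lam' := mul_one _
    obtain ⟨r, hrD, hrgt⟩ := exists_lt_of_lt_csSup ⟨_, hDmem n⟩ h1
    obtain ⟨s, c, hc, hs, rfl⟩ := hrD
    exact ⟨s, c, hc, hs, hrgt⟩
  choose gs gc hgc hgs hgnorm using exGood
  set nxt : ℕ → ℕ := fun n => max n ((gs n).sup id + 1) with hnxt
  set idx : ℕ → ℕ := fun k => Nat.rec m₀ (fun _ n => nxt n) k with hidx
  set s : ℕ → Finset ℕ := fun k => gs (idx k) with hsdef
  set c : ℕ → ℕ → 𝕜 := fun k => gc (idx k) with hcdef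
  set v : ℕ → Y := fun k => ∑ j ∈ s k, c k j • x j with hv
  set vX : ℕ → X := fun k => ∑ j ∈ s k, c k j • ψ (stdb j) with hvX
  have hidx_m₀ : ∀ k, m₀ ≤ idx k := by
    intro k
    induction k with
    | zero => exact le_rfl
    | succ k ih => exact le_trans ih (le_max_left _ _)
  have hmono : Monotone idx := monotone_nat_of_le_succ (fun k => le_max_left _ _)
  have hmem_lb : ∀ k j, j ∈ s k → idx k ≤ j := fun k j h => hgs (idx k) j h
  have hmem_ub : ∀ k j, j ∈ s k → j < idx (k+1) := by
    intro k j h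
    have h1 : j ≤ (gs (idx k)).sup id := Finset.le_sup (f := id) h
    have h2 : (gs (idx k)).sup id + 1 ≤ idx (k+1) := le_max_right _ _
    omega
  have hdisj : ∀ k l, k < l → ∀ j, j ∈ s k → j ∈ s l → False := by
    intro k l hkl j hjk hjl
    have h1 := hmem_ub k j hjk
    have h2 := hmem_lb l j hjl
    have h3 := hmono (show k+1 ≤ l from hkl)
    omega
  have hm₀mem : ∀ k j, j ∈ s k → m₀ ≤ j := fun k j h => le_trans (hidx_m₀ k) (hmem_lb k j h)
  have hvlow : ∀ k, lam' * (1 - δ) < ‖v k‖ := fun k => hgnorm (idx k)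
  have hRvX : ∀ k, R (vX k) = v k := by
    intro k
    rw [hvX, hv, map_sum]
    apply Finset.sum_congr rfl
    intro j hj
    rw [map_smul]
    rfl
  have hU1 : ∀ (t : Finset ℕ) (a : ℕ → 𝕜), (∀ k ∈ t, ‖a k‖ ≤ 1) →
      ‖∑ k ∈ t, a k • v k‖ ≤ lam m₀ := by
    intro t a ha
    set S : Finset ℕ := t.biUnion s with hS
    set cc : ℕ → 𝕜 := fun j => ∑ k ∈ t, (if j ∈ s k then a k * c k j else 0) with hcc
    have hccle : ∀ j, ‖cc j‖ ≤ 1 := by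
      intro j
      by_cases hex : ∃ k ∈ t, j ∈ s k
      · obtain ⟨k₀, hk₀t, hk₀⟩ := hex
        rw [hcc]
        simp only []
        rw [Finset.sum_eq_single k₀]
        · rw [if_pos hk₀]
          calc ‖a k₀ * c k₀ j‖ = ‖a k₀‖ * ‖c k₀ j‖ := norm_mul _ _
            _ ≤ 1 * 1 := mul_le_mul (ha k₀ hk₀t) (hgc (idx k₀) j) (norm_nonneg _) zero_le_one
            _ = 1 := one_mul 1
        · intro b hb hbne
          rw [if_neg]
          intro hjb
          rcases lt_trichotomy b k₀ with h | h | h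
          · exact hdisj b k₀ h j hjb hk₀
          · exact hbne h
          · exact hdisj k₀ b h j hk₀ hjb
        · intro h; exact absurd hk₀t h
      · rw [hcc]
        simp only []
        rw [Finset.sum_eq_zero]
        · simp
        · intro k hk
          rw [if_neg (fun hj => hex ⟨k, hk, hj⟩)]
    have hsum : ∑ j ∈ S, cc j • x j = ∑ k ∈ t, a k • v k := by
      rw [hcc]
      simp only [Finset.sum_smul, ite_smul, zero_smul]
      rw [Finset.sum_comm]
      apply Finset.sum_congr rfl
      intro k hk
      rw [Finset.sum_ite_mem, Finset.inter_eq_right.2 (Finset.subset_biUnion_of_mem s hk)]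
      rw [hv, Finset.smul_sum]
      apply Finset.sum_congr rfl
      intro j hj
      rw [mul_smul]
    rw [← hsum]
    apply hlam_mem_le m₀
    refine ⟨S, cc, hccle, ?_, rfl⟩
    intro j hj
    obtain ⟨k, hk, hjk⟩ := Finset.mem_biUnion.1 hj
    exact hm₀mem k j hjk
  have hUσ : ∀ (t : Finset ℕ) (a : ℕ → 𝕜) (σ : ℕ → ℕ), Function.Injective σ →
      (∀ k ∈ t, ‖a k‖ ≤ 1) → ‖∑ k ∈ t, a k • v (σ k)‖ ≤ lam m₀ := by
    intro t a σ hσ ha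
    have h1 : ∑ k ∈ t, a k • v (σ k) = ∑ j ∈ t.image σ, (a (Function.invFun σ j)) • v j := by
      rw [Finset.sum_image (fun a _ b _ h => hσ h)]
      apply Finset.sum_congr rfl
      intro k hk
      rw [Function.leftInverse_invFun hσ k]
    rw [h1]
    apply hU1
    intro j hj
    obtain ⟨k, hk, rfl⟩ := Finset.mem_image.1 hj
    rw [Function.leftInverse_invFun hσ k]
    exact ha k hk
  set L : ℝ := lam' * (1 - 3*δ) with hL
  have hLpos : 0 < L := mul_pos hlam'_pos h3δ
  have hLcore : ∀ (t : Finset ℕ) (a : ℕ → 𝕜) (k₀ : ℕ), k₀ ∈ t → (∀ k ∈ t, ‖a k‖ ≤ 1) →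
      a k₀ = 1 → L ≤ ‖∑ k ∈ t, a k • v k‖ := by
    intro t a k₀ hk₀ ha hak₀
    set w : Y := ∑ k ∈ t.erase k₀, a k • v k with hw
    have hsum : ∑ k ∈ t, a k • v k = v k₀ + w := by
      rw [← Finset.add_sum_erase t _ hk₀, hak₀, one_smul]
    have hdiff : ‖v k₀ - w‖ ≤ lam m₀ := by
      have h1 : v k₀ - w = ∑ k ∈ t, (if k = k₀ then (1:𝕜) else -a k) • v k := by
        rw [← Finset.add_sum_erase t _ hk₀, if_pos rfl, one_smul]
        have h2 : ∑ k ∈ t.erase k₀, (if k = k₀ then (1:𝕜) else -a k) • v k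
            = -∑ k ∈ t.erase k₀, a k • v k := by
          rw [← Finset.sum_neg_distrib]
          apply Finset.sum_congr rfl
          intro k hk
          rw [if_neg (Finset.ne_of_mem_erase hk), neg_smul]
        rw [h2, sub_eq_add_neg]
      rw [h1]
      apply hU1 t _
      intro k hk
      by_cases h : k = k₀
      · rw [if_pos h]; simp
      · rw [if_neg h, norm_neg]; exact ha k hk
    have h2 : v k₀ + v k₀ = (v k₀ + w) + (v k₀ - w) := by abel
    have h3 : 2*‖v k₀‖ = ‖v k₀ + v k₀‖ := by
      rw [← two_smul 𝕜, norm_smul]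
      norm_num
    have h4 : 2*‖v k₀‖ ≤ ‖v k₀ + w‖ + ‖v k₀ - w‖ := by
      calc 2*‖v k₀‖ = ‖v k₀ + v k₀‖ := h3
        _ = ‖(v k₀ + w) + (v k₀ - w)‖ := by rw [← h2]
        _ ≤ _ := norm_add_le _ _
    rw [hsum]
    have h5 := hvlow k₀
    have e1 : lam' * (1+δ) = lam' + lam'*δ := by ring
    have e2 : lam' * (1-δ) = lam' - lam'*δ := by ring
    have e3 : L = lam' - 3*(lam'*δ) := by rw [hL]; ring
    linarith
  have hLmax : ∀ (t : Finset ℕ) (a : ℕ → 𝕜) (n : ℕ), n ∈ t →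
      ‖a n‖ * L ≤ ‖∑ k ∈ t, a k • v k‖ := by
    intro t a n hn
    obtain ⟨k₀, hk₀t, hk₀max⟩ := Finset.exists_max_image t (fun k => ‖a k‖) ⟨n, hn⟩
    by_cases hM : a k₀ = 0
    · have h0 : ‖a n‖ ≤ 0 := by
        have := hk₀max n hn
        rw [hM, norm_zero] at this
        exact this
      have : ‖a n‖ = 0 := le_antisymm h0 (norm_nonneg _)
      rw [this, zero_mul]
      exact norm_nonneg _
    · have hk₀pos : 0 < ‖a k₀‖ := norm_pos_iff.2 hM
      set b : ℕ → 𝕜 := fun k => (a k₀)⁻¹ * a k with hb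
      have hb1 : ∀ k ∈ t, ‖b k‖ ≤ 1 := by
        intro k hk
        rw [hb]
        simp only []
        rw [norm_mul, norm_inv, inv_mul_le_iff₀ hk₀pos, mul_one]
        exact hk₀max k hk
      have hbk₀ : b k₀ = 1 := inv_mul_cancel₀ hM
      have hcore := hLcore t b k₀ hk₀t hb1 hbk₀
      have hsum2 : ∑ k ∈ t, b k • v k = (a k₀)⁻¹ • ∑ k ∈ t, a k • v k := by
        rw [Finset.smul_sum]
        apply Finset.sum_congr rfl
        intro k hk
        rw [hb]
        simp only []
        rw [mul_smul]
      rw [hsum2, norm_smul, norm_inv] at hcore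
      have h5 : ‖a k₀‖ * L ≤ ‖∑ k ∈ t, a k • v k‖ := by
        rw [inv_mul_eq_div, le_div_iff₀ hk₀pos] at hcore
        calc ‖a k₀‖ * L = L * ‖a k₀‖ := mul_comm _ _
          _ ≤ _ := hcore
      calc ‖a n‖ * L ≤ ‖a k₀‖ * L := mul_le_mul_of_nonneg_right (hk₀max n hn) hLpos.le
        _ ≤ _ := h5
  have hLinv : ‖((L:𝕜))⁻¹‖ = L⁻¹ := by
    rw [norm_inv, RCLike.norm_ofReal, abs_of_pos hLpos]
  refine ⟨fun k => ((L:𝕜))⁻¹ • v k, fun k => ((L:𝕜))⁻¹ • vX k, ?_, ?_, ?_⟩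
  · intro k
    rw [map_smul, hRvX]
  · intro t a σ hσ ha
    have h1 : ∑ k ∈ t, a k • ((L:𝕜))⁻¹ • v (σ k) = ((L:𝕜))⁻¹ • ∑ k ∈ t, a k • v (σ k) := by
      rw [Finset.smul_sum]
      apply Finset.sum_congr rfl
      intro k hk
      rw [smul_comm]
    rw [h1, norm_smul, hLinv]
    have h3 := hUσ t a σ hσ ha
    have h4 : lam m₀ ≤ C * L := by
      calc lam m₀ ≤ lam' * (1 + δ) := hm₀.le
        _ = C * L := by rw [hL, hδeq]; ring
    calc L⁻¹ * ‖∑ k ∈ t, a k • v (σ k)‖ ≤ L⁻¹ * (C * L) :=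
          mul_le_mul_of_nonneg_left (h3.trans h4) (by positivity)
      _ = C := by field_simp
  · intro t a n hn
    have h1 : ∑ k ∈ t, a k • ((L:𝕜))⁻¹ • v k = ((L:𝕜))⁻¹ • ∑ k ∈ t, a k • v k := by
      rw [Finset.smul_sum]
      apply Finset.sum_congr rfl
      intro k hk
      rw [smul_comm]
    rw [h1, norm_smul, hLinv]
    have h2 := hLmax t a n hn
    calc ‖a n‖ = (‖a n‖ * L) * L⁻¹ := by field_simp
      _ ≤ ‖∑ k ∈ t, a k • v k‖ * L⁻¹ := mul_le_mul_of_nonneg_right h2 (by positivity)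
      _ = L⁻¹ * ‖∑ k ∈ t, a k • v k‖ := mul_comm _ _

end Main

/-- Let `X`, `Y` be Banach spaces, where `X` contains a closed subspace
isomorphic to `c₀` and the dual unit ball of `Y` is weak* sequentially compact, and let
`R : X → Y` be bounded below by `η > 0`. Then for every `C > 1`, the range of `R` contains
a closed subspace `Z` which is `C`-complemented in `Y` and `C`-isomorphic to `c₀`, and
there are operators `U : Y → c₀`, `V : c₀ → X` with `U ∘ R ∘ V = I_{c₀}` and
`‖U‖·‖V‖ ≤ C²/η`. -/
theorem statement13 {𝕜 : Type*} [RCLike 𝕜]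
    {X : Type*} [NormedAddCommGroup X] [NormedSpace 𝕜 X] [CompleteSpace X]
    {Y : Type*} [NormedAddCommGroup Y] [NormedSpace 𝕜 Y] [CompleteSpace Y]
    (hX : ∃ W : Submodule 𝕜 X, IsClosed (W : Set X) ∧ Nonempty (↥W ≃L[𝕜] C₀(ℕ, 𝕜)))
    (hY : ∀ g : ℕ → (Y →L[𝕜] 𝕜), (∀ n, ‖g n‖ ≤ 1) →
      ∃ ρ : ℕ → ℕ, StrictMono ρ ∧ ∃ g₀ : Y →L[𝕜] 𝕜, ‖g₀‖ ≤ 1 ∧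
        ∀ y : Y, Tendsto (fun n => g (ρ n) y) atTop (nhds (g₀ y)))
    (R : X →L[𝕜] Y) (η : ℝ) (hη : 0 < η) (hR : ∀ x : X, η * ‖x‖ ≤ ‖R x‖)
    (C : ℝ) (hC : 1 < C) :
    (∃ Z : Submodule 𝕜 Y, (Z : Set Y) ⊆ Set.range ⇑R ∧ IsClosed (Z : Set Y) ∧
        (∃ P : Y →L[𝕜] Y, P ∘L P = P ∧ ‖P‖ ≤ C ∧ Set.range ⇑P = (Z : Set Y)) ∧
        ∃ e : ↥Z ≃L[𝕜] C₀(ℕ, 𝕜),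
          ‖(e : ↥Z →L[𝕜] C₀(ℕ, 𝕜))‖ * ‖(e.symm : C₀(ℕ, 𝕜) →L[𝕜] ↥Z)‖ ≤ C) ∧
      ∃ (U : Y →L[𝕜] C₀(ℕ, 𝕜)) (V : C₀(ℕ, 𝕜) →L[𝕜] X),
        U ∘L R ∘L V = ContinuousLinearMap.id 𝕜 (C₀(ℕ, 𝕜)) ∧ ‖U‖ * ‖V‖ ≤ C ^ 2 / η := by
  classical
  obtain ⟨y, yX, hyR, hu, hl⟩ := stepA hX R η hη hR C hC
  -- linear independence and coordinate functionals
  have hli : LinearIndependent 𝕜 y := by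
    rw [linearIndependent_iff']
    intro t g hg i hi
    have h1 := hl t g i hi
    rw [hg, norm_zero] at h1
    exact norm_le_zero_iff.1 h1
  have hfex : ∀ n : ℕ, ∃ F : Y →L[𝕜] 𝕜, ‖F‖ ≤ 1 ∧ ∀ k, F (y k) = if n = k then 1 else 0 := by
    intro n
    have hbound : ∀ w : ↥(Submodule.span 𝕜 (Set.range y)),
        ‖((Finsupp.lapply n).comp (hli.repr : ↥(Submodule.span 𝕜 (Set.range y)) →ₗ[𝕜] (ℕ →₀ 𝕜))) w‖
          ≤ 1 * ‖w‖ := by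
      intro w
      rw [one_mul]
      have hw0 : Finsupp.linearCombination 𝕜 y (hli.repr w) = (w : Y) :=
        hli.linearCombination_repr w
      rw [Finsupp.linearCombination_apply, Finsupp.sum] at hw0
      have hsum : ∑ k ∈ (hli.repr w).support ∪ {n}, (hli.repr w) k • y k = (w : Y) := by
        rw [← hw0]
        symm
        apply Finset.sum_subset Finset.subset_union_left
        intro k _ hk
        rw [Finsupp.notMem_support_iff.1 hk, zero_smul]
      have h1 := hl ((hli.repr w).support ∪ {n}) (hli.repr w) n
        (Finset.mem_union_right _ (Finset.mem_singleton_self n))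
      rw [hsum] at h1
      show ‖(hli.repr w) n‖ ≤ ‖w‖
      calc ‖(hli.repr w) n‖ ≤ ‖(w : Y)‖ := h1
        _ = ‖w‖ := rfl
    let fc : ↥(Submodule.span 𝕜 (Set.range y)) →L[𝕜] 𝕜 :=
      LinearMap.mkContinuous ((Finsupp.lapply n).comp
        (hli.repr : ↥(Submodule.span 𝕜 (Set.range y)) →ₗ[𝕜] (ℕ →₀ 𝕜))) 1 hbound
    obtain ⟨F, hFe, hFn⟩ := exists_extension_norm_eq (Submodule.span 𝕜 (Set.range y)) fc
    refine ⟨F, ?_, ?_⟩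
    · rw [hFn]
      exact LinearMap.mkContinuous_norm_le _ zero_le_one _
    · intro k
      have hk : y k ∈ Submodule.span 𝕜 (Set.range y) := Submodule.subset_span ⟨k, rfl⟩
      have h2 : F (y k) = fc ⟨y k, hk⟩ := hFe ⟨y k, hk⟩
      have hrepr : hli.repr ⟨y k, hk⟩ = Finsupp.single k 1 := hli.repr_eq_single k ⟨y k, hk⟩ rfl
      have h3 : fc ⟨y k, hk⟩ = (hli.repr ⟨y k, hk⟩) n := rfl
      rw [h2, h3, hrepr]
      simp [Finsupp.single_apply, eq_comm]
  choose f hfnorm hfbi using hfex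
  obtain ⟨ρ, hρ, g₀, hg₀n, hg₀⟩ := hY f hfnorm
  have hinj := hρ.injective
  -- the difference vectors and functionals
  set z : ℕ → Y := fun k => y (ρ (2*k)) - y (ρ (2*k+1)) with hz
  set zX : ℕ → X := fun k => yX (ρ (2*k)) - yX (ρ (2*k+1)) with hzX
  set h : ℕ → Y →L[𝕜] 𝕜 := fun k => f (ρ (2*k)) - f (ρ (2*k+1)) with hh
  have hzR : ∀ k, R (zX k) = z k := by
    intro k
    rw [hzX, hz]
    simp only [map_sub, hyR]
  have hbi : ∀ j k, h j (z k) = if j = k then 2 else 0 := by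
    intro j k
    rw [hh, hz]
    simp only [ContinuousLinearMap.sub_apply, map_sub]
    rw [hfbi, hfbi, hfbi, hfbi]
    have e2 : ρ (2*j) ≠ ρ (2*k+1) := fun hc => by have := hinj hc; omega
    have e3 : ρ (2*j+1) ≠ ρ (2*k) := fun hc => by have := hinj hc; omega
    by_cases hjk : j = k
    · subst hjk
      rw [if_pos rfl, if_pos rfl, if_neg e2, if_neg e3, if_pos rfl]
      ring
    · have e1 : ρ (2*j) ≠ ρ (2*k) := fun hc => by have := hinj hc; omega
      have e4 : ρ (2*j+1) ≠ ρ (2*k+1) := fun hc => by have := hinj hc; omega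
      rw [if_neg e1, if_neg e2, if_neg e3, if_neg e4, if_neg hjk]
      ring
  have hh0 : ∀ w : Y, Tendsto (fun k => h k w) atTop (nhds 0) := by
    intro w
    have ht2 : Tendsto (fun k : ℕ => 2*k) atTop atTop :=
      tendsto_atTop_atTop.mpr fun b => ⟨b, fun a ha => by omega⟩
    have ht2' : Tendsto (fun k : ℕ => 2*k+1) atTop atTop :=
      tendsto_atTop_atTop.mpr fun b => ⟨b, fun a ha => by omega⟩
    have heven : Tendsto (fun k => f (ρ (2*k)) w) atTop (nhds (g₀ w)) := (hg₀ w).comp ht2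
    have hodd : Tendsto (fun k => f (ρ (2*k+1)) w) atTop (nhds (g₀ w)) := (hg₀ w).comp ht2'
    have := heven.sub hodd
    rw [sub_self] at this
    exact this
  have hhn : ∀ k, ‖h k‖ ≤ 2 := fun k =>
    le_trans (norm_sub_le _ _) (by linarith [hfnorm (ρ (2*k)), hfnorm (ρ (2*k+1))])
  -- norm bounds for sums of z
  have hzu1 : ∀ (t : Finset ℕ) (a : ℕ → 𝕜), (∀ k ∈ t, ‖a k‖ ≤ 1) →
      ‖∑ k ∈ t, a k • z k‖ ≤ C := by
    intro t a ha
    set pair : ℕ → Finset ℕ := fun k => {2*k, 2*k+1} with hpair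
    have hpd : (↑t : Set ℕ).PairwiseDisjoint pair := by
      intro k _ l _ hkl
      simp only [Function.onFun]
      rw [Finset.disjoint_left]
      intro m hm1 hm2
      rw [hpair] at hm1 hm2
      simp only [Finset.mem_insert, Finset.mem_singleton] at hm1 hm2
      omega
    set A : ℕ → 𝕜 := fun m => if m % 2 = 0 then a (m/2) else -(a (m/2)) with hA
    have hexp : ∑ k ∈ t, a k • z k = ∑ m ∈ t.biUnion pair, A m • y (ρ m) := by
      rw [Finset.sum_biUnion hpd]
      apply Finset.sum_congr rfl
      intro k _
      rw [hpair]
      simp only []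
      rw [Finset.sum_pair (by omega : 2*k ≠ 2*k+1)]
      have hA1 : A (2*k) = a k := by
        rw [hA]
        simp only []
        rw [if_pos (by omega)]
        congr 1
        omega
      have hA2 : A (2*k+1) = -(a k) := by
        rw [hA]
        simp only []
        rw [if_neg (by omega)]
        congr 2
        omega
      rw [hA1, hA2, hz]
      simp only []
      rw [smul_sub, neg_smul, ← sub_eq_add_neg]
    rw [hexp]
    apply hu (t.biUnion pair) A ρ hinj
    intro m hm
    obtain ⟨k, hk, hmk⟩ := Finset.mem_biUnion.1 hm
    rw [hpair] at hmk
    simp only [Finset.mem_insert, Finset.mem_singleton] at hmk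
    have hm2 : m / 2 = k := by omega
    rw [hA]
    simp only []
    by_cases hp : m % 2 = 0
    · rw [if_pos hp, hm2]; exact ha k hk
    · rw [if_neg hp, norm_neg, hm2]; exact ha k hk
  have hzuM : ∀ (t : Finset ℕ) (a : ℕ → 𝕜) (M : ℝ), 0 ≤ M → (∀ k ∈ t, ‖a k‖ ≤ M) →
      ‖∑ k ∈ t, a k • z k‖ ≤ C * M := by
    intro t a M hM ha
    rcases eq_or_lt_of_le hM with hM0 | hM0
    · have hz0 : ∀ k ∈ t, a k • z k = 0 := by
        intro k hk
        have h1 : ‖a k‖ ≤ 0 := le_trans (ha k hk) hM0.symm.le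
        rw [norm_le_zero_iff.1 h1, zero_smul]
      rw [Finset.sum_eq_zero hz0, norm_zero, ← hM0, mul_zero]
    · set b : ℕ → 𝕜 := fun k => ((M:𝕜))⁻¹ * a k with hb
      have hMne : ((M:𝕜)) ≠ 0 := by
        simp only [ne_eq, RCLike.ofReal_eq_zero]
        linarith
      have hb1 : ∀ k ∈ t, ‖b k‖ ≤ 1 := by
        intro k hk
        rw [hb]
        simp only []
        rw [norm_mul, norm_inv, RCLike.norm_ofReal, abs_of_pos hM0,
          inv_mul_le_iff₀ hM0, mul_one]
        exact ha k hk
      have hsum : ∑ k ∈ t, a k • z k = (M:𝕜) • ∑ k ∈ t, b k • z k := by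
        rw [Finset.smul_sum]
        apply Finset.sum_congr rfl
        intro k _
        rw [hb]
        simp only []
        rw [smul_smul, mul_inv_cancel_left₀ hMne]
      rw [hsum, norm_smul, RCLike.norm_ofReal, abs_of_pos hM0]
      calc M * ‖∑ k ∈ t, b k • z k‖ ≤ M * C := mul_le_mul_of_nonneg_left (hzu1 t b hb1) hM0.le
        _ = C * M := mul_comm _ _
  have hzXuM : ∀ (t : Finset ℕ) (a : ℕ → 𝕜) (M : ℝ), 0 ≤ M → (∀ k ∈ t, ‖a k‖ ≤ M) →
      ‖∑ k ∈ t, a k • zX k‖ ≤ η⁻¹ * C * M := by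
    intro t a M hM ha
    have h1 : η * ‖∑ k ∈ t, a k • zX k‖ ≤ ‖R (∑ k ∈ t, a k • zX k)‖ := hR _
    have h2 : R (∑ k ∈ t, a k • zX k) = ∑ k ∈ t, a k • z k := by
      rw [map_sum]
      apply Finset.sum_congr rfl
      intro k _
      rw [map_smul, hzR]
    rw [h2] at h1
    have h3 := hzuM t a M hM ha
    calc ‖∑ k ∈ t, a k • zX k‖ = η⁻¹ * (η * ‖∑ k ∈ t, a k • zX k‖) := by
          rw [← mul_assoc, inv_mul_cancel₀ (ne_of_gt hη), one_mul]
      _ ≤ η⁻¹ * (C * M) := mul_le_mul_of_nonneg_left (h1.trans h3) (inv_nonneg.2 hη.le)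
      _ = η⁻¹ * C * M := by ring
  -- summability
  have hsumz : ∀ (a : ℕ → 𝕜), Tendsto a atTop (nhds 0) → Summable (fun k => a k • z k) := by
    intro a ha
    apply aux_summable _ (fun k => ‖a k‖) ?_ C (by linarith) (fun t M hM haM => hzuM t a M hM haM)
    simpa using ha.norm
  have hsumzX : ∀ (a : ℕ → 𝕜), Tendsto a atTop (nhds 0) → Summable (fun k => a k • zX k) := by
    intro a ha
    apply aux_summable _ (fun k => ‖a k‖) ?_ (η⁻¹ * C)
      (mul_nonneg (inv_nonneg.2 hη.le) (by linarith))
      (fun t M hM haM => hzXuM t a M hM haM)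
    simpa using ha.norm
  -- the operator U
  have htwo : ‖(2:𝕜)‖ = 2 := by norm_num
  have hUb : ∀ (w : Y) (k : ℕ), ‖(2:𝕜)⁻¹ * h k w‖ ≤ ‖w‖ := by
    intro w k
    rw [norm_mul, norm_inv, htwo]
    have h1 : ‖h k w‖ ≤ 2 * ‖w‖ :=
      le_trans ((h k).le_opNorm w) (mul_le_mul_of_nonneg_right (hhn k) (norm_nonneg w))
    calc 2⁻¹ * ‖h k w‖ ≤ 2⁻¹ * (2 * ‖w‖) := by
          apply mul_le_mul_of_nonneg_left h1 (by norm_num)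
      _ = ‖w‖ := by ring
  have hUtend : ∀ w : Y, Tendsto (fun k => (2:𝕜)⁻¹ * h k w) atTop (nhds 0) := by
    intro w
    have := (hh0 w).const_mul ((2:𝕜)⁻¹)
    simpa using this
  set U₀ : Y →ₗ[𝕜] C₀(ℕ, 𝕜) :=
    { toFun := fun w => mkC0 (fun k => (2:𝕜)⁻¹ * h k w) (hUtend w)
      map_add' := by
        intro u w
        apply ZeroAtInftyContinuousMap.ext
        intro k
        show (2:𝕜)⁻¹ * h k (u + w) = (2:𝕜)⁻¹ * h k u + (2:𝕜)⁻¹ * h k w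
        rw [map_add]
        ring
      map_smul' := by
        intro cs w
        apply ZeroAtInftyContinuousMap.ext
        intro k
        show (2:𝕜)⁻¹ * h k (cs • w) = cs * ((2:𝕜)⁻¹ * h k w)
        rw [map_smul, smul_eq_mul]
        ring } with hU₀
  set U : Y →L[𝕜] C₀(ℕ, 𝕜) := U₀.mkContinuous 1
    (fun w => by
      rw [one_mul]
      exact c0_norm_le _ _ (norm_nonneg w) (fun k => hUb w k)) with hU
  have hUapp : ∀ (w : Y) (k : ℕ), U w k = (2:𝕜)⁻¹ * h k w := fun w k => rfl
  have hUn : ‖U‖ ≤ 1 := U₀.mkContinuous_norm_le zero_le_one _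
  -- the operator YV : C₀ → Y
  have hVsum : ∀ a : C₀(ℕ, 𝕜), Summable (fun k => a k • z k) := fun a => hsumz _ (c0_tendsto a)
  have hVsumX : ∀ a : C₀(ℕ, 𝕜), Summable (fun k => a k • zX k) := fun a => hsumzX _ (c0_tendsto a)
  set YV₀ : C₀(ℕ, 𝕜) →ₗ[𝕜] Y :=
    { toFun := fun a => ∑' k, a k • z k
      map_add' := by
        intro a b
        have h1 : (fun k => ((a + b) k) • z k) = fun k => a k • z k + b k • z k := by
          funext k
          rw [ZeroAtInftyContinuousMap.coe_add, Pi.add_apply, add_smul]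
        rw [h1]
        exact Summable.tsum_add (hVsum a) (hVsum b)
      map_smul' := by
        intro cs a
        simp only [RingHom.id_apply]
        have h1 : (fun k => ((cs • a) k) • z k) = fun k => cs • (a k • z k) := by
          funext k
          rw [ZeroAtInftyContinuousMap.coe_smul, Pi.smul_apply, smul_smul, smul_eq_mul]
        rw [h1]
        exact ((hVsum a).hasSum.const_smul cs).tsum_eq } with hYV₀
  have hYVb : ∀ a : C₀(ℕ, 𝕜), ‖∑' k, a k • z k‖ ≤ C * ‖a‖ := by
    intro a
    apply aux_hasSum_norm_le (hVsum a).hasSum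
    intro t
    exact hzuM t _ ‖a‖ (norm_nonneg a) (fun k _ => c0_norm_apply_le a k)
  set YV : C₀(ℕ, 𝕜) →L[𝕜] Y := YV₀.mkContinuous C (fun a => hYVb a) with hYV
  have hYVapp : ∀ a : C₀(ℕ, 𝕜), YV a = ∑' k, a k • z k := fun a => rfl
  have hYVn : ‖YV‖ ≤ C := YV₀.mkContinuous_norm_le (by linarith) _
  -- the operator V : C₀ → X
  set V₀ : C₀(ℕ, 𝕜) →ₗ[𝕜] X :=
    { toFun := fun a => ∑' k, a k • zX k
      map_add' := by
        intro a b
        have h1 : (fun k => ((a + b) k) • zX k) = fun k => a k • zX k + b k • zX k := by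
          funext k
          rw [ZeroAtInftyContinuousMap.coe_add, Pi.add_apply, add_smul]
        rw [h1]
        exact Summable.tsum_add (hVsumX a) (hVsumX b)
      map_smul' := by
        intro cs a
        simp only [RingHom.id_apply]
        have h1 : (fun k => ((cs • a) k) • zX k) = fun k => cs • (a k • zX k) := by
          funext k
          rw [ZeroAtInftyContinuousMap.coe_smul, Pi.smul_apply, smul_smul, smul_eq_mul]
        rw [h1]
        exact ((hVsumX a).hasSum.const_smul cs).tsum_eq } with hV₀
  have hVb : ∀ a : C₀(ℕ, 𝕜), ‖∑' k, a k • zX k‖ ≤ η⁻¹ * C * ‖a‖ := by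
    intro a
    apply aux_hasSum_norm_le (hVsumX a).hasSum
    intro t
    exact hzXuM t _ ‖a‖ (norm_nonneg a) (fun k _ => c0_norm_apply_le a k)
  set V : C₀(ℕ, 𝕜) →L[𝕜] X := V₀.mkContinuous (η⁻¹ * C) (fun a => hVb a) with hV
  have hVn : ‖V‖ ≤ η⁻¹ * C := V₀.mkContinuous_norm_le (mul_nonneg (inv_nonneg.2 hη.le) (by linarith)) _
  -- key identities
  have hRV : ∀ a : C₀(ℕ, 𝕜), R (V a) = YV a := by
    intro a
    show R (∑' k, a k • zX k) = ∑' k, a k • z k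
    rw [R.map_tsum (hVsumX a)]
    apply tsum_congr
    intro k
    rw [map_smul, hzR]
  have hUYV : ∀ a : C₀(ℕ, 𝕜), U (YV a) = a := by
    intro a
    apply ZeroAtInftyContinuousMap.ext
    intro k
    rw [hUapp]
    show (2:𝕜)⁻¹ * h k (∑' j, a j • z j) = a k
    rw [(h k).map_tsum (hVsum a)]
    have h1 : (fun j => h k (a j • z j)) = fun j => if j = k then (2:𝕜) * a k else 0 := by
      funext j
      rw [map_smul, smul_eq_mul, hbi k j]
      by_cases hjk : j = k
      · subst hjk
        rw [if_pos rfl, if_pos rfl]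
        ring
      · rw [if_neg (fun hc => hjk hc.symm), if_neg hjk, mul_zero]
    rw [h1, tsum_ite_eq, ← mul_assoc, inv_mul_cancel₀ (two_ne_zero), one_mul]
  -- the subspace Z
  set Z : Submodule 𝕜 Y := (Submodule.span 𝕜 (Set.range z)).topologicalClosure with hZ
  have hYVmem : ∀ a : C₀(ℕ, 𝕜), YV a ∈ Z := by
    intro a
    have h1 : ∀ t : Finset ℕ, ∑ k ∈ t, a k • z k ∈ Z := fun t =>
      Submodule.sum_mem _ (fun k _ => Submodule.smul_mem _ _
        ((Submodule.span 𝕜 (Set.range z)).le_topologicalClosure (Submodule.subset_span ⟨k, rfl⟩)))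
    have h2 : IsClosed (Z : Set Y) := Submodule.isClosed_topologicalClosure _
    exact h2.mem_of_tendsto (hVsum a).hasSum (Filter.Eventually.of_forall h1)
  have hPspan : ∀ w ∈ Submodule.span 𝕜 (Set.range z), YV (U w) = w := by
    intro w hw
    induction hw using Submodule.span_induction with
    | mem w hw =>
      obtain ⟨k, rfl⟩ := hw
      have hUz : U (z k) = stdb k := by
        apply ZeroAtInftyContinuousMap.ext
        intro j
        rw [hUapp]
        show (2:𝕜)⁻¹ * h j (z k) = _
        rw [hbi j k]
        by_cases hjk : j = k
        · subst hjk
          rw [if_pos rfl]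
          simp [stdb]
        · rw [if_neg hjk, mul_zero]
          simp [stdb, hjk]
      rw [hUz, hYVapp]
      have h1 : (fun j => (stdb (𝕜 := 𝕜) k) j • z j) = fun j => if j = k then z k else 0 := by
        funext j
        by_cases hjk : j = k
        · subst hjk
          simp [stdb]
        · simp [stdb, hjk]
      rw [h1, tsum_ite_eq]
    | zero => rw [map_zero, map_zero]
    | add u v hu hv hu' hv' => rw [map_add, map_add, hu', hv']
    | smul c u hu hu' => rw [map_smul, map_smul, hu']
  have hPcl : ∀ w ∈ Z, YV (U w) = w := by
    have heq : Set.EqOn (⇑(YV.comp U)) id ((Submodule.span 𝕜 (Set.range z) : Submodule 𝕜 Y) : Set Y) :=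
      fun w hw => hPspan w hw
    have hcl := heq.closure (YV.comp U).continuous continuous_id
    intro w hw
    have hwc : w ∈ closure ((Submodule.span 𝕜 (Set.range z) : Submodule 𝕜 Y) : Set Y) := by
      rw [← Submodule.topologicalClosure_coe]
      exact hw
    exact hcl hwc
  -- closedness of range R
  have hclosedR : IsClosed (Set.range ⇑R) := by
    have hanti : AntilipschitzWith (⟨η⁻¹, by positivity⟩ : NNReal) ⇑R := by
      apply R.antilipschitz_of_bound
      intro x
      have := hR x
      show ‖x‖ ≤ η⁻¹ * ‖R x‖
      rw [← le_div_iff₀' hη] at this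
      calc ‖x‖ ≤ ‖R x‖ / η := this
        _ = η⁻¹ * ‖R x‖ := by ring
    exact hanti.isClosed_range R.uniformContinuous
  constructor
  · -- first part
    refine ⟨Z, ?_, Submodule.isClosed_topologicalClosure _, ⟨YV.comp U, ?_, ?_, ?_⟩, ?_⟩
    · -- Z ⊆ range R
      intro w hw
      have hsub : ((Submodule.span 𝕜 (Set.range z) : Submodule 𝕜 Y) : Set Y) ⊆ Set.range ⇑R := by
        intro u hu
        induction hu using Submodule.span_induction with
        | mem u hu =>
          obtain ⟨k, rfl⟩ := hu
          exact ⟨zX k, hzR k⟩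
        | zero => exact ⟨0, map_zero R⟩
        | add u v hu hv hu' hv' =>
          obtain ⟨xu, rfl⟩ := hu'
          obtain ⟨xv, rfl⟩ := hv'
          exact ⟨xu + xv, map_add R xu xv⟩
        | smul c u hu hu' =>
          obtain ⟨xu, rfl⟩ := hu'
          exact ⟨c • xu, map_smul R c xu⟩
      have hwc : w ∈ closure ((Submodule.span 𝕜 (Set.range z) : Submodule 𝕜 Y) : Set Y) := by
        rw [← Submodule.topologicalClosure_coe]
        exact hw
      have := closure_mono hsub hwc
      rwa [hclosedR.closure_eq] at this
    · -- projection
      apply ContinuousLinearMap.ext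
      intro w
      show YV (U (YV (U w))) = YV (U w)
      exact hPcl _ (hYVmem (U w))
    · -- norm of P
      calc ‖YV.comp U‖ ≤ ‖YV‖ * ‖U‖ := ContinuousLinearMap.opNorm_comp_le _ _
        _ ≤ C * 1 := mul_le_mul hYVn hUn (norm_nonneg U) (by linarith)
        _ = C := mul_one C
    · -- range of P
      apply Set.Subset.antisymm
      · rintro _ ⟨w, rfl⟩
        exact hYVmem (U w)
      · intro w hw
        exact ⟨w, hPcl w hw⟩
    · -- the isomorphism e
      set E1 : ↥Z →L[𝕜] C₀(ℕ, 𝕜) := U.comp Z.subtypeL with hE1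
      set E2 : C₀(ℕ, 𝕜) →L[𝕜] ↥Z := YV.codRestrict Z hYVmem with hE2
      have hE21 : Function.LeftInverse E2 E1 := by
        intro w
        apply Subtype.ext
        show YV (U ↑w) = ↑w
        exact hPcl ↑w w.2
      have hE12 : Function.RightInverse E2 E1 := by
        intro a
        show U (YV a) = a
        exact hUYV a
      set e : ↥Z ≃L[𝕜] C₀(ℕ, 𝕜) := ContinuousLinearEquiv.equivOfInverse E1 E2 hE21 hE12 with he
      refine ⟨e, ?_⟩
      have he1 : ‖(e : ↥Z →L[𝕜] C₀(ℕ, 𝕜))‖ ≤ 1 := by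
        apply ContinuousLinearMap.opNorm_le_bound _ zero_le_one
        intro w
        rw [one_mul]
        have hcoe : (e : ↥Z →L[𝕜] C₀(ℕ, 𝕜)) w = U ↑w := rfl
        rw [hcoe]
        exact c0_norm_le _ _ (norm_nonneg _) (fun k => hUb (↑w) k)
      have he2 : ‖(e.symm : C₀(ℕ, 𝕜) →L[𝕜] ↥Z)‖ ≤ C := by
        apply ContinuousLinearMap.opNorm_le_bound _ (by linarith)
        intro a
        have hcoe : (e.symm : C₀(ℕ, 𝕜) →L[𝕜] ↥Z) a = E2 a := rfl
        rw [hcoe]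
        show ‖(E2 a : Y)‖ ≤ C * ‖a‖
        have : (E2 a : Y) = YV a := rfl
        rw [this]
        exact hYVb a
      calc ‖(e : ↥Z →L[𝕜] C₀(ℕ, 𝕜))‖ * ‖(e.symm : C₀(ℕ, 𝕜) →L[𝕜] ↥Z)‖ ≤ 1 * C :=
            mul_le_mul he1 he2 (norm_nonneg ((e.symm : C₀(ℕ, 𝕜) →L[𝕜] ↥Z))) zero_le_one
        _ = C := one_mul C
  · -- second part
    refine ⟨U, V, ?_, ?_⟩
    · apply ContinuousLinearMap.ext
      intro a
      rw [ContinuousLinearMap.comp_apply, ContinuousLinearMap.comp_apply,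
        ContinuousLinearMap.id_apply, hRV a]
      exact hUYV a
    · have hCC : C ≤ C ^ 2 := by
        calc C = C * 1 := (mul_one C).symm
          _ ≤ C * C := mul_le_mul_of_nonneg_left hC.le (by linarith)
          _ = C ^ 2 := (sq C).symm
      calc ‖U‖ * ‖V‖ ≤ 1 * (η⁻¹ * C) :=
            mul_le_mul hUn hVn (norm_nonneg V) zero_le_one
        _ = C / η := by rw [one_mul, ← div_eq_inv_mul]
        _ ≤ C ^ 2 / η := (div_le_div_iff_of_pos_right hη).2 hCC
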